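/- Let Ω° = {(u,v) ∈ ℝ² : max(|u|, |v|) ≤ 1}. Then cos_{Ω°} and sin_{Ω°} are periodic with period 8, cos_{Ω°} θ = 1 for θ ∈ [0,1] ∪ [7,8] and cos_{Ω°} θ = ½|θ − 3| + ½|θ − 5| − 2 for θ ∈ [1,7], and sin_{Ω°} θ = cos_{Ω°}(θ − 2). -/

import Mathlib

open MeasureTheory Real Set

/-- Counterclockwise polar angle of a point of the plane, in `[0, 2π)`. -/
noncomputable def polarAngle (v : ℝ × ℝ) : ℝ :=
  if 0 ≤ Complex.arg ((v.1 : ℂ) + (v.2 : ℂ) * Complex.I) then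
    Complex.arg ((v.1 : ℂ) + (v.2 : ℂ) * Complex.I)
  else Complex.arg ((v.1 : ℂ) + (v.2 : ℂ) * Complex.I) + 2 * Real.pi

/-- Area of the sector of `Ω` between the positive `x`-axis and the polar angle `β`. -/
noncomputable def sectorArea (Ω : Set (ℝ × ℝ)) (β : ℝ) : ℝ :=
  (volume {v | v ∈ Ω ∧ polarAngle v ≤ β}).toReal

/-- Area of a planar set. -/
noncomputable def area2 (Ω : Set (ℝ × ℝ)) : ℝ := (volume Ω).toReal

/-- `P : ℝ → ℝ × ℝ`, `P θ = (cos_Ω θ, sin_Ω θ)`, is the sector-area parametrization of `∂Ω`: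
for `θ ∈ [0, 2𝕊)` (where `𝕊 = area Ω`), `P θ ∈ ∂Ω` and the sector of `Ω` between the
positive `x`-axis and the ray `O P θ` has area `θ/2`; `P` is `2𝕊`-periodic. -/
def IsCT (Ω : Set (ℝ × ℝ)) (P : ℝ → ℝ × ℝ) : Prop :=
  (∀ θ : ℝ, P (θ + 2 * area2 Ω) = P θ) ∧
  ∀ θ ∈ Set.Ico (0 : ℝ) (2 * area2 Ω),
    P θ ∈ frontier Ω ∧ sectorArea Ω (polarAngle (P θ)) = θ / 2

/-- The polar set `Ω° = {q : ⟨q, v⟩ ≤ 1 ∀ v ∈ Ω}`. -/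
def polarSet (Ω : Set (ℝ × ℝ)) : Set (ℝ × ℝ) :=
  {q | ∀ v ∈ Ω, q.1 * v.1 + q.2 * v.2 ≤ 1}

/-- The covector `q` determines a supporting half-plane of `Ω` at `x`. -/
def Supports (Ω : Set (ℝ × ℝ)) (x q : ℝ × ℝ) : Prop :=
  q.1 * x.1 + q.2 * x.2 = 1 ∧ ∀ v ∈ Ω, q.1 * v.1 + q.2 * v.2 ≤ 1

namespace SqCT

def sq : Set (ℝ × ℝ) := {v : ℝ × ℝ | max |v.1| |v.2| ≤ 1}

noncomputable def zc (v : ℝ × ℝ) : ℂ := (v.1 : ℂ) + (v.2 : ℂ) * Complex.I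

@[simp] lemma zc_re (v : ℝ × ℝ) : (zc v).re = v.1 := by simp [zc]
@[simp] lemma zc_im (v : ℝ × ℝ) : (zc v).im = v.2 := by simp [zc]

lemma zc_ne_zero {v : ℝ × ℝ} (hv : v ≠ 0) : zc v ≠ 0 := by
  intro h
  apply hv
  have h1 : (zc v).re = 0 := by rw [h]; simp
  have h2 : (zc v).im = 0 := by rw [h]; simp
  simp only [zc_re, zc_im] at h1 h2
  exact Prod.ext h1 h2

lemma pa_def (v : ℝ × ℝ) : polarAngle v =
    if 0 ≤ (zc v).arg then (zc v).arg else (zc v).arg + 2 * π := rfl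

lemma pa_nonneg (v : ℝ × ℝ) : 0 ≤ polarAngle v := by
  rw [pa_def]
  split
  · assumption
  · nlinarith [Complex.neg_pi_lt_arg (zc v), Real.pi_pos]

lemma pa_lt_two_pi (v : ℝ × ℝ) : polarAngle v < 2 * π := by
  rw [pa_def]
  split
  · nlinarith [Complex.arg_le_pi (zc v), Real.pi_pos]
  · linarith [Complex.arg_le_pi (zc v), not_le.mp (by assumption : ¬ 0 ≤ (zc v).arg)]

lemma pa_eq_arg {v : ℝ × ℝ} (h : 0 ≤ (zc v).arg) : polarAngle v = (zc v).arg := by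
  rw [pa_def, if_pos h]

lemma pa_eq_arg_add {v : ℝ × ℝ} (h : (zc v).arg < 0) :
    polarAngle v = (zc v).arg + 2 * π := by
  rw [pa_def, if_neg (not_le.mpr h)]

/-- pa determines arg -/
lemma arg_eq_of_pa_eq {a b : ℝ × ℝ} (h : polarAngle a = polarAngle b) :
    (zc a).arg = (zc b).arg := by
  have pa := Complex.arg_le_pi (zc a)
  have pb := Complex.arg_le_pi (zc b)
  have na := Complex.neg_pi_lt_arg (zc a)
  have nb := Complex.neg_pi_lt_arg (zc b)
  have pip := Real.pi_pos
  rw [pa_def, pa_def] at h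
  split at h <;> split at h <;> linarith

lemma sq_eq_closedBall : sq = Metric.closedBall (0 : ℝ × ℝ) 1 := by
  ext v
  simp only [sq, mem_setOf_eq, Metric.mem_closedBall, dist_zero_right, Prod.norm_def,
    Real.norm_eq_abs]

lemma frontier_sq : frontier sq = {v : ℝ × ℝ | max |v.1| |v.2| = 1} := by
  rw [sq_eq_closedBall, frontier_closedBall _ one_ne_zero]
  ext v
  simp [Prod.norm_def, Real.norm_eq_abs]

lemma frontier_sq_ne_zero {v : ℝ × ℝ} (hv : v ∈ frontier sq) : v ≠ 0 := by
  rw [frontier_sq] at hv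
  intro h
  rw [h] at hv
  simp at hv

lemma volume_sq : volume sq = 4 := by
  have : sq = Icc (-1 : ℝ) 1 ×ˢ Icc (-1 : ℝ) 1 := by
    ext v
    simp only [sq, mem_setOf_eq, mem_prod, mem_Icc, max_le_iff, abs_le]
  rw [this, MeasureTheory.Measure.volume_eq_prod, Measure.prod_prod, Real.volume_Icc]
  rw [show (1 : ℝ) - -1 = 2 by norm_num, ← ENNReal.ofReal_mul (by norm_num)]
  norm_num

lemma area2_sq : area2 sq = 4 := by
  rw [area2, volume_sq]
  norm_num


lemma arg_eq_arctan {z : ℂ} (h : 0 < z.re) : z.arg = Real.arctan (z.im / z.re) := by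
  have h1 : |z.arg| < π / 2 := Complex.abs_arg_lt_pi_div_two_iff.mpr (Or.inl h)
  rw [abs_lt] at h1
  rw [← Complex.tan_arg, Real.arctan_tan h1.1 h1.2]

/-- The key characterization of the sector condition. -/
lemma sector_char {p : ℝ × ℝ} (hp2 : 0 < p.2) (hp1 : 0 ≤ p.1) (v : ℝ × ℝ) :
    polarAngle v ≤ polarAngle p ↔ (0 ≤ v.2 ∧ v.2 * p.1 ≤ v.1 * p.2) := by
  have pip := Real.pi_pos
  have hargp_nonneg : 0 ≤ (zc p).arg := Complex.arg_nonneg_iff.mpr (by simpa using hp2.le)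
  have hpa_p : polarAngle p = (zc p).arg := pa_eq_arg hargp_nonneg
  have hargp_le : (zc p).arg ≤ π / 2 := Complex.arg_le_pi_div_two_iff.mpr (Or.inl (by simpa using hp1))
  have hargp_pos : 0 < (zc p).arg := by
    rcases hargp_nonneg.lt_or_eq with h | h
    · exact h
    · exfalso
      have := Complex.arg_eq_zero_iff.mp h.symm
      simp only [zc_im] at this
      linarith [this.2, hp2]
  rcases lt_trichotomy v.2 0 with hv2 | hv2 | hv2
  · -- v.2 < 0 : pa v > π ≥ pa p; RHS false
    have hargv : (zc v).arg < 0 := Complex.arg_neg_iff.mpr (by simpa using hv2)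
    rw [pa_eq_arg_add hargv, hpa_p]
    constructor
    · intro h
      exfalso
      nlinarith [Complex.neg_pi_lt_arg (zc v)]
    · rintro ⟨h, -⟩; linarith
  · -- v.2 = 0
    rcases le_or_gt 0 v.1 with hv1 | hv1
    · -- nonneg real axis: pa v = 0
      have : (zc v).arg = 0 := by
        rw [Complex.arg_eq_zero_iff]
        simp [hv2, hv1]
      rw [pa_eq_arg this.ge, this]
      constructor
      · intro _
        exact ⟨hv2.ge, by nlinarith⟩
      · intro _
        rw [hpa_p]
        exact hargp_nonneg
    · -- negative real axis : pa v = π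
      have : (zc v).arg = π := by
        rw [Complex.arg_eq_pi_iff]
        simp [hv2, hv1]
      rw [pa_eq_arg (by rw [this]; positivity), this, hpa_p]
      constructor
      · intro h; exfalso; linarith
      · rintro ⟨-, h⟩
        exfalso
        nlinarith
  · -- v.2 > 0
    have hargv_nonneg : 0 ≤ (zc v).arg := Complex.arg_nonneg_iff.mpr (by simpa using hv2.le)
    rw [pa_eq_arg hargv_nonneg, hpa_p]
    rcases lt_trichotomy v.1 0 with hv1 | hv1 | hv1
    · -- v.1 < 0: arg v > π/2
      have : ¬ (zc v).arg ≤ π / 2 := by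
        rw [Complex.arg_le_pi_div_two_iff]
        push_neg
        constructor
        · simpa using hv1
        · simpa using hv2.le
      constructor
      · intro h; exfalso; exact this (h.trans hargp_le)
      · rintro ⟨-, h⟩; exfalso; nlinarith
    · -- v.1 = 0: arg v = π/2
      have hv : (zc v).arg = π / 2 := by
        rw [Complex.arg_eq_pi_div_two_iff]
        simp [hv1, hv2]
      rw [hv]
      constructor
      · intro h
        have : (zc p).arg = π / 2 := le_antisymm hargp_le h
        have := Complex.arg_eq_pi_div_two_iff.mp this
        simp only [zc_re] at this
        refine ⟨hv2.le, ?_⟩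
        rw [this.1]
        simp [hv1]
      · rintro ⟨-, h⟩
        rw [hv1] at h
        have hp1' : p.1 ≤ 0 := by nlinarith
        have : p.1 = 0 := le_antisymm hp1' hp1
        have : (zc p).arg = π / 2 := by
          rw [Complex.arg_eq_pi_div_two_iff]
          simp [this, hp2]
        rw [this]
    · -- v.1 > 0
      rcases hp1.lt_or_eq with hp1' | hp1'
      · -- p.1 > 0 : compare arctans
        rw [arg_eq_arctan (by simpa using hv1), arg_eq_arctan (by simpa using hp1')]
        simp only [zc_re, zc_im]
        rw [Real.arctan_strictMono.le_iff_le, div_le_div_iff₀ (by linarith) (by linarith)]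
        constructor
        · intro h
          exact ⟨hv2.le, by nlinarith⟩
        · rintro ⟨-, h⟩
          nlinarith
      · -- p.1 = 0 : arg p = π/2 > arg v; RHS true
        have hargp : (zc p).arg = π / 2 := by
          rw [Complex.arg_eq_pi_div_two_iff]
          simp [hp1'.symm, hp2]
        have hargv_lt : (zc v).arg < π / 2 := by
          have h2 := (Complex.abs_arg_lt_pi_div_two_iff (z := zc v)).mpr
            (Or.inl (by simpa using hv1))
          rw [abs_lt] at h2
          exact h2.2
        constructor
        · intro _
          exact ⟨hv2.le, by rw [← hp1']; nlinarith⟩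
        · intro _
          rw [hargp]
          exact hargv_lt.le

lemma graph_null {f : ℝ → ℝ} (hf : Measurable f) :
    volume {p : ℝ × ℝ | p.2 = f p.1} = 0 := by
  have hms : MeasurableSet {p : ℝ × ℝ | p.2 = f p.1} := by
    have : {p : ℝ × ℝ | p.2 = f p.1} = {p : ℝ × ℝ | p.2 - f p.1 = 0} := by
      ext p; simp [sub_eq_zero]
    rw [this]
    exact measurableSet_eq_fun (measurable_snd.sub (hf.comp measurable_fst)) measurable_const
  rw [MeasureTheory.Measure.volume_eq_prod, Measure.prod_apply hms]
  have : ∀ x : ℝ, (Prod.mk x ⁻¹' {p : ℝ × ℝ | p.2 = f p.1}) = {f x} := by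
    intro x; ext y; simp [eq_comm]
  simp only [this]
  simp

lemma volIcc {f g : ℝ → ℝ} (hf : Continuous f) (hg : Continuous g) {a b : ℝ} (hab : a ≤ b)
    (hfg : ∀ x ∈ Icc a b, f x ≤ g x) :
    volume {p : ℝ × ℝ | p.1 ∈ Icc a b ∧ p.2 ∈ Icc (f p.1) (g p.1)} =
      ENNReal.ofReal (∫ x in a..b, (g x - f x)) := by
  set S := {p : ℝ × ℝ | p.1 ∈ Icc a b ∧ p.2 ∈ Icc (f p.1) (g p.1)} with hS
  have hsub : regionBetween f g (Icc a b) ⊆ S := by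
    rintro p ⟨h1, h2⟩
    exact ⟨h1, Ioo_subset_Icc_self h2⟩
  have hdiff : S \ regionBetween f g (Icc a b) ⊆
      {p : ℝ × ℝ | p.2 = f p.1} ∪ {p : ℝ × ℝ | p.2 = g p.1} := by
    rintro p ⟨⟨h1, h2⟩, h3⟩
    have h4 : p.2 ∉ Ioo (f p.1) (g p.1) := fun hIoo => h3 ⟨h1, hIoo⟩
    simp only [mem_Ioo, not_and_or, not_lt] at h4
    rcases h4 with h | h
    · exact Or.inl (le_antisymm h h2.1)
    · exact Or.inr (le_antisymm h2.2 h)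
  have hnull : volume (S \ regionBetween f g (Icc a b)) = 0 :=
    measure_mono_null hdiff (by
      refine le_antisymm (le_trans (measure_union_le _ _) ?_) (zero_le)
      rw [graph_null hf.measurable, graph_null hg.measurable]
      simp)
  have hae : S =ᵐ[volume] regionBetween f g (Icc a b) := by
    rw [Filter.eventuallyEq_set]
    have : ∀ᵐ p ∂(volume : Measure (ℝ × ℝ)), p ∉ S \ regionBetween f g (Icc a b) := by
      rw [ae_iff]
      simp only [not_not]
      exact hnull
    filter_upwards [this] with p hp
    constructor
    · intro hpS
      by_contra hpR
      exact hp ⟨hpS, hpR⟩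
    · exact fun h => hsub h
  rw [measure_congr hae, MeasureTheory.Measure.volume_eq_prod,
    volume_regionBetween_eq_integral (hf.integrableOn_Icc) (hg.integrableOn_Icc)
      measurableSet_Icc hfg,
    intervalIntegral.integral_of_le hab, MeasureTheory.integral_Icc_eq_integral_Ioc]
  rfl

lemma vol1 {t : ℝ} (ht : 0 < t) (ht1 : t ≤ 1) :
    volume {v : ℝ × ℝ | v ∈ sq ∧ 0 ≤ v.2 ∧ v.2 * 1 ≤ v.1 * t} = ENNReal.ofReal (t / 2) := by
  have hset : {v : ℝ × ℝ | v ∈ sq ∧ 0 ≤ v.2 ∧ v.2 * 1 ≤ v.1 * t} =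
      {p : ℝ × ℝ | p.1 ∈ Icc 0 1 ∧ p.2 ∈ Icc ((fun _ => (0:ℝ)) p.1) ((fun x => t * x) p.1)} := by
    ext v
    simp only [sq, mem_setOf_eq, mem_Icc, max_le_iff, abs_le]
    constructor
    · rintro ⟨⟨h1, h2⟩, h3, h4⟩
      refine ⟨⟨by nlinarith, h1.2⟩, h3, by nlinarith⟩
    · rintro ⟨⟨h1, h2⟩, h3, h4⟩
      refine ⟨⟨⟨by linarith, h2⟩, ⟨by linarith, by nlinarith⟩⟩, h3, by nlinarith⟩
  have hvol := volIcc (f := fun _ => (0:ℝ)) (g := fun x => t * x) continuous_const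
    (continuous_const.mul continuous_id) (zero_le_one)
    (fun x hx => by simpa using mul_nonneg ht.le hx.1)
  rw [hset, hvol]
  congr 1
  have h0 : ∫ x in (0:ℝ)..1, ((fun x => t * x) x - (fun _ => (0:ℝ)) x) = t / 2 := by
    simp only [sub_zero]
    rw [intervalIntegral.integral_const_mul, integral_id]
    ring
  rw [h0]

lemma vol2 {c : ℝ} (hc : 0 ≤ c) (hc1 : c ≤ 1) :
    volume {v : ℝ × ℝ | v ∈ sq ∧ 0 ≤ v.2 ∧ v.2 * c ≤ v.1 * 1} =
      ENNReal.ofReal (1 - c / 2) := by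
  have hswap : {v : ℝ × ℝ | v ∈ sq ∧ 0 ≤ v.2 ∧ v.2 * c ≤ v.1 * 1} =
      Prod.swap ⁻¹' {p : ℝ × ℝ | p.1 ∈ Icc 0 1 ∧
        p.2 ∈ Icc ((fun x => c * x) p.1) ((fun _ => (1:ℝ)) p.1)} := by
    ext v
    simp only [sq, mem_preimage, Prod.swap_prod_mk, mem_setOf_eq, mem_Icc, max_le_iff, abs_le,
      Prod.fst_swap, Prod.snd_swap]
    constructor
    · rintro ⟨⟨h1, h2⟩, h3, h4⟩
      exact ⟨⟨h3, h2.2⟩, by nlinarith, h1.2⟩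
    · rintro ⟨⟨h1, h2⟩, h3, h4⟩
      refine ⟨⟨⟨by nlinarith, h4⟩, ⟨by linarith, h2⟩⟩, h1, by nlinarith⟩
  rw [hswap]
  rw [show (volume : Measure (ℝ × ℝ)) = Measure.map Prod.swap volume from ?_]
  · rw [Measure.map_apply measurable_swap]
    · rw [show Prod.swap ⁻¹' (Prod.swap ⁻¹' _) = _ from ?_]
      · have hvol := volIcc (f := fun x => c * x) (g := fun _ => (1:ℝ))
          (continuous_const.mul continuous_id) continuous_const zero_le_one
          (fun x hx => by nlinarith [hx.1, hx.2])
        rw [hvol]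
        congr 1
        have h0 : ∫ x in (0:ℝ)..1, ((fun _ => (1:ℝ)) x - (fun x => c * x) x) = 1 - c / 2 := by
          simp only []
          rw [intervalIntegral.integral_sub intervalIntegrable_const
            (((by fun_prop : Continuous fun x : ℝ => c * x)).intervalIntegrable 0 1)]
          rw [intervalIntegral.integral_const_mul, integral_id]
          norm_num
          ring
        rw [h0]
      · ext p; simp
    · have : MeasurableSet {p : ℝ × ℝ | p.1 ∈ Icc (0:ℝ) 1 ∧
          p.2 ∈ Icc ((fun x => c * x) p.1) ((fun _ => (1:ℝ)) p.1)} := by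
        apply MeasurableSet.inter
        · exact measurable_fst measurableSet_Icc
        · apply MeasurableSet.inter
          · exact measurableSet_le (measurable_const.mul measurable_fst) measurable_snd
          · exact measurableSet_le measurable_snd measurable_const
      exact this.preimage measurable_swap
  · rw [MeasureTheory.Measure.volume_eq_prod]
    exact (MeasureTheory.Measure.measurePreserving_swap).map_eq.symm

def rot (v : ℝ × ℝ) : ℝ × ℝ := (-v.2, v.1)
def rotinv (v : ℝ × ℝ) : ℝ × ℝ := (v.2, -v.1)

@[simp] lemma rot_rotinv (v : ℝ × ℝ) : rot (rotinv v) = v := by simp [rot, rotinv]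
@[simp] lemma rotinv_rot (v : ℝ × ℝ) : rotinv (rot v) = v := by simp [rot, rotinv]

lemma zc_rot (v : ℝ × ℝ) : zc (rot v) = Complex.I * zc v := by
  simp only [zc, rot]
  push_cast
  ring_nf
  rw [Complex.I_sq]
  ring

/-- arg of I * z -/
lemma arg_I_mul {z : ℂ} (hz : z ≠ 0) :
    (Complex.I * z).arg = if z.arg ≤ π / 2 then z.arg + π / 2 else z.arg - 3 * π / 2 := by
  have pip := Real.pi_pos
  have hlo := Complex.neg_pi_lt_arg z
  have hhi := Complex.arg_le_pi z
  have habs : 0 < ‖z‖ := norm_pos_iff.mpr hz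
  have key : Complex.I * z = ((‖z‖ : ℝ) : ℂ) *
      (Complex.cos ((z.arg + π / 2 : ℝ) : ℂ) + Complex.sin ((z.arg + π / 2 : ℝ) : ℂ) * Complex.I) := by
    push_cast
    rw [Complex.cos_add_pi_div_two, Complex.sin_add_pi_div_two]
    conv_lhs => rw [← Complex.norm_mul_cos_add_sin_mul_I z]
    ring_nf
    rw [Complex.I_sq]
    ring
  split
  · rename_i h
    rw [key, Complex.arg_mul_cos_add_sin_mul_I habs (by constructor <;> linarith)]
  · rename_i h
    push_neg at h
    have key2 : Complex.I * z = ((‖z‖ : ℝ) : ℂ) *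
        (Complex.cos ((z.arg - 3 * π / 2 : ℝ) : ℂ) +
          Complex.sin ((z.arg - 3 * π / 2 : ℝ) : ℂ) * Complex.I) := by
      rw [key]
      congr 1
      have e1 : ((z.arg - 3 * π / 2 : ℝ) : ℂ) = ((z.arg + π / 2 : ℝ) : ℂ) - 2 * (π : ℂ) := by
        push_cast
        ring
      rw [e1, Complex.cos_sub_two_pi, Complex.sin_sub_two_pi]
    rw [key2, Complex.arg_mul_cos_add_sin_mul_I habs (by constructor <;> linarith)]

lemma pa_rot {v : ℝ × ℝ} (hv : v ≠ 0) (h : polarAngle v < 3 * π / 2) :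
    polarAngle (rot v) = polarAngle v + π / 2 := by
  have pip := Real.pi_pos
  have hlo := Complex.neg_pi_lt_arg (zc v)
  have hhi := Complex.arg_le_pi (zc v)
  have harg := arg_I_mul (zc_ne_zero hv)
  rw [← zc_rot] at harg
  rcases le_or_gt 0 (zc v).arg with h0 | h0
  · rw [pa_eq_arg h0] at h ⊢
    rcases le_or_gt (zc v).arg (π / 2) with h1 | h1
    · rw [pa_eq_arg (by rw [harg, if_pos h1]; linarith), harg, if_pos h1]
    · rw [pa_eq_arg_add (by rw [harg, if_neg (not_le.mpr h1)]; linarith), harg,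
        if_neg (not_le.mpr h1)]
      ring
  · rw [pa_eq_arg_add h0] at h ⊢
    have h1 : (zc v).arg ≤ π / 2 := by linarith
    have h2 : (zc v).arg < -π / 2 := by linarith
    rw [pa_eq_arg_add (by rw [harg, if_pos h1]; linarith), harg, if_pos h1]
    ring

lemma pa_rotinv {w : ℝ × ℝ} (hw : w ≠ 0) (h : π / 2 ≤ polarAngle w) :
    polarAngle (rotinv w) = polarAngle w - π / 2 := by
  have pip := Real.pi_pos
  set v := rotinv w with hv
  have hvne : v ≠ 0 := by
    intro h0
    apply hw
    have := congrArg rot h0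
    rw [rot_rotinv] at this
    simp [rot] at this
    exact this.trans Prod.mk_zero_zero
  have hrw : rot v = w := rot_rotinv w
  rcases lt_or_ge (polarAngle v) (3 * π / 2) with hcase | hcase
  · rw [← hrw, pa_rot hvne hcase]
    ring
  · exfalso
    -- pa v ≥ 3π/2 means arg v ∈ [-π/2, 0), then pa (rot v) < π/2
    have h0 : (zc v).arg < 0 := by
      by_contra hc
      push_neg at hc
      rw [pa_eq_arg hc] at hcase
      have := Complex.arg_le_pi (zc v)
      linarith
    rw [pa_eq_arg_add h0] at hcase
    have h2 : -π / 2 ≤ (zc v).arg := by linarith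
    have harg := arg_I_mul (zc_ne_zero hvne)
    rw [← zc_rot] at harg
    have h1 : (zc v).arg ≤ π / 2 := by linarith
    have : polarAngle (rot v) = (zc v).arg + π / 2 := by
      rw [pa_eq_arg]
      · rw [harg, if_pos h1]
      · rw [harg, if_pos h1]; linarith
    rw [hrw] at this
    rw [this] at h
    linarith

/-- rot is measure preserving. -/
lemma rot_measurePreserving : MeasurePreserving rot (volume : Measure (ℝ × ℝ)) volume := by
  have h1 : MeasurePreserving (Prod.swap : ℝ × ℝ → ℝ × ℝ) volume volume := by
    rw [MeasureTheory.Measure.volume_eq_prod]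
    exact MeasureTheory.Measure.measurePreserving_swap
  have h2 : MeasurePreserving (Prod.map (Neg.neg : ℝ → ℝ) (id : ℝ → ℝ)) volume volume := by
    rw [MeasureTheory.Measure.volume_eq_prod]
    exact (Measure.measurePreserving_neg volume).prod (MeasurePreserving.id volume)
  have : rot = (Prod.map (Neg.neg : ℝ → ℝ) (id : ℝ → ℝ)) ∘ Prod.swap := by
    ext v <;> simp [rot, Prod.map]
  rw [this]
  exact h2.comp h1

lemma rotinv_measurePreserving :
    MeasurePreserving rotinv (volume : Measure (ℝ × ℝ)) volume := by
  have h1 : MeasurePreserving (Prod.swap : ℝ × ℝ → ℝ × ℝ) volume volume := by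
    rw [MeasureTheory.Measure.volume_eq_prod]
    exact MeasureTheory.Measure.measurePreserving_swap
  have h2 : MeasurePreserving (Prod.map (id : ℝ → ℝ) (Neg.neg : ℝ → ℝ)) volume volume := by
    rw [MeasureTheory.Measure.volume_eq_prod]
    exact (MeasurePreserving.id volume).prod (Measure.measurePreserving_neg volume)
  have : rotinv = (Prod.map (id : ℝ → ℝ) (Neg.neg : ℝ → ℝ)) ∘ Prod.swap := by
    ext v <;> simp [rotinv, Prod.map]
  rw [this]
  exact h2.comp h1


end SqCT

namespace SqCT

noncomputable def sectorArea' (β : ℝ) : ℝ := (volume {v : ℝ × ℝ | v ∈ sq ∧ polarAngle v ≤ β}).toReal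

lemma measurable_pa : Measurable polarAngle := by
  have hz : Measurable zc := by
    apply Measurable.add
    · exact (Complex.measurable_ofReal).comp measurable_fst
    · exact ((Complex.measurable_ofReal).comp measurable_snd).mul measurable_const
  have harg : Measurable fun v : ℝ × ℝ => (zc v).arg := Complex.measurable_arg.comp hz
  have : polarAngle = fun v => if 0 ≤ (zc v).arg then (zc v).arg else (zc v).arg + 2 * π := rfl
  rw [this]
  exact Measurable.ite (measurableSet_le measurable_const harg) harg (harg.add measurable_const)

lemma meas_sector (β : ℝ) : MeasurableSet {v : ℝ × ℝ | v ∈ sq ∧ polarAngle v ≤ β} := by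
  apply MeasurableSet.inter
  · have : IsClosed sq := by
      rw [sq_eq_closedBall]
      exact Metric.isClosed_closedBall
    exact this.measurableSet
  · exact measurableSet_le measurable_pa measurable_const

lemma sector_subset (β : ℝ) : {v : ℝ × ℝ | v ∈ sq ∧ polarAngle v ≤ β} ⊆ sq := fun _ h => h.1

lemma sector_vol_ne_top (β : ℝ) : volume {v : ℝ × ℝ | v ∈ sq ∧ polarAngle v ≤ β} ≠ ⊤ := by
  refine ne_top_of_le_ne_top ?_ (measure_mono (sector_subset β))
  rw [volume_sq]
  simp

lemma sq_rot_iff (v : ℝ × ℝ) : rot v ∈ sq ↔ v ∈ sq := by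
  simp only [sq, rot, mem_setOf_eq, abs_neg]
  rw [max_comm]

lemma frontier_rot {v : ℝ × ℝ} (h : v ∈ frontier sq) : rot v ∈ frontier sq := by
  rw [frontier_sq] at h ⊢
  simp only [mem_setOf_eq, rot, abs_neg] at h ⊢
  rw [max_comm]
  exact h

/-- vol of first quadrant of the square is 1, phrased via polarAngle ≤ π/2 -/
lemma vol_quadrant : volume {v : ℝ × ℝ | v ∈ sq ∧ polarAngle v ≤ π / 2} = 1 := by
  have hpa : polarAngle (0, 1) = π / 2 := by
    have : zc ((0:ℝ), (1:ℝ)) = Complex.I := by simp [zc]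
    rw [pa_eq_arg (by rw [this, Complex.arg_I]; positivity), this, Complex.arg_I]
  have hchar := sector_char (p := ((0:ℝ),(1:ℝ))) (by norm_num) (by norm_num)
  rw [hpa] at hchar
  have : {v : ℝ × ℝ | v ∈ sq ∧ polarAngle v ≤ π / 2} =
      {v : ℝ × ℝ | v ∈ sq ∧ 0 ≤ v.2 ∧ v.2 * (0:ℝ) ≤ v.1 * 1} := by
    ext v
    rw [mem_setOf_eq, mem_setOf_eq, hchar v]
  rw [this, vol2 le_rfl zero_le_one]
  norm_num

/-- The rotation step for sector areas. -/
lemma sector_step {b : ℝ × ℝ} (hb : b ≠ 0) (h32 : polarAngle b < 3 * π / 2) :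
    sectorArea' (polarAngle (rot b)) = sectorArea' (polarAngle b) + 1 := by
  have pip := Real.pi_pos
  have hrot := pa_rot hb h32
  set β := polarAngle b with hβ
  have hβ0 : 0 ≤ β := pa_nonneg b
  -- the image set
  have himg : rot '' {v : ℝ × ℝ | v ∈ sq ∧ polarAngle v ≤ β} =
      rotinv ⁻¹' {v : ℝ × ℝ | v ∈ sq ∧ polarAngle v ≤ β} := by
    ext w
    constructor
    · rintro ⟨v, hv, rfl⟩
      simpa [rotinv_rot] using hv
    · intro hw
      exact ⟨rotinv w, hw, rot_rotinv w⟩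
  -- main set equality
  have hset : {v : ℝ × ℝ | v ∈ sq ∧ polarAngle v ≤ β + π / 2} =
      {v : ℝ × ℝ | v ∈ sq ∧ polarAngle v ≤ π / 2} ∪
        rot '' {v : ℝ × ℝ | v ∈ sq ∧ polarAngle v ≤ β} := by
    ext w
    simp only [mem_setOf_eq, mem_union]
    constructor
    · rintro ⟨hw, hpa⟩
      rcases le_or_gt (polarAngle w) (π / 2) with h | h
      · exact Or.inl ⟨hw, h⟩
      · right
        have hwne : w ≠ 0 := by
          intro h0
          rw [h0] at h
          have : polarAngle (0 : ℝ × ℝ) = 0 := by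
            rw [pa_eq_arg] <;> simp [zc, Complex.arg_zero]
          rw [this] at h
          linarith
        refine ⟨rotinv w, ⟨?_, ?_⟩, rot_rotinv w⟩
        · rw [← sq_rot_iff, rot_rotinv]; exact hw
        · rw [pa_rotinv hwne h.le]; linarith
    · rintro (⟨hw, hpa⟩ | ⟨v, ⟨hv, hpa⟩, rfl⟩)
      · exact ⟨hw, by linarith⟩
      · refine ⟨(sq_rot_iff v).mpr hv, ?_⟩
        rcases eq_or_ne v 0 with rfl | hvne
        · have : rot (0 : ℝ × ℝ) = 0 := by simp [rot]
          rw [this]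
          have : polarAngle (0 : ℝ × ℝ) = 0 := by
            rw [pa_eq_arg] <;> simp [zc, Complex.arg_zero]
          rw [this]; linarith
        · rw [pa_rot hvne (by linarith [pa_lt_two_pi v, pa_nonneg v])]
          linarith
  -- intersection is null
  have hint0 : volume ({v : ℝ × ℝ | v ∈ sq ∧ polarAngle v ≤ π / 2} ∩
      rot '' {v : ℝ × ℝ | v ∈ sq ∧ polarAngle v ≤ β}) = 0 := by
    have hsub : {v : ℝ × ℝ | v ∈ sq ∧ polarAngle v ≤ π / 2} ∩
        rot '' {v : ℝ × ℝ | v ∈ sq ∧ polarAngle v ≤ β} ⊆ {w : ℝ × ℝ | w.1 = 0} := by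
      rintro w ⟨⟨-, hw2⟩, ⟨v, ⟨-, hv2⟩, rfl⟩⟩
      rcases eq_or_ne v 0 with rfl | hvne
      · simp [rot]
      · have hp := pa_rot hvne (by linarith)
        have hple : polarAngle (rot v) = π / 2 := le_antisymm hw2 (by
          rw [hp]; linarith [pa_nonneg v])
        have harg : (zc (rot v)).arg = π / 2 := by
          by_cases h0 : 0 ≤ (zc (rot v)).arg
          · rw [← pa_eq_arg h0, hple]
          · push_neg at h0
            rw [pa_eq_arg_add h0] at hple
            linarith [Complex.neg_pi_lt_arg (zc (rot v))]
        have := (Complex.arg_eq_pi_div_two_iff.mp harg).1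
        simpa using this
    refine measure_mono_null hsub ?_
    have : {w : ℝ × ℝ | w.1 = 0} = ({0} : Set ℝ) ×ˢ (univ : Set ℝ) := by
      ext w; simp [Prod.ext_iff, eq_comm]
    rw [this, MeasureTheory.Measure.volume_eq_prod, Measure.prod_prod]
    simp
  have hA := meas_sector β
  have himgmeas : MeasurableSet (rot '' {v : ℝ × ℝ | v ∈ sq ∧ polarAngle v ≤ β}) := by
    rw [himg]
    exact hA.preimage rotinv_measurePreserving.measurable
  have hvolimg : volume (rot '' {v : ℝ × ℝ | v ∈ sq ∧ polarAngle v ≤ β}) =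
      volume {v : ℝ × ℝ | v ∈ sq ∧ polarAngle v ≤ β} := by
    rw [himg]
    exact rotinv_measurePreserving.measure_preimage hA.nullMeasurableSet
  have hadd := measure_union_add_inter (μ := volume)
    {v : ℝ × ℝ | v ∈ sq ∧ polarAngle v ≤ π / 2} himgmeas
  rw [hint0, add_zero, vol_quadrant, hvolimg] at hadd
  unfold sectorArea'
  rw [hrot, hset, hadd, ENNReal.toReal_add (by simp) (sector_vol_ne_top β)]
  simp [add_comm]

noncomputable def P0 (θ : ℝ) : ℝ × ℝ := if θ ≤ 1 then (1, θ) else (2 - θ, 1)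

lemma pa_lt_pi_div_two {v : ℝ × ℝ} (h1 : 0 < v.1) (h2 : 0 ≤ v.2) :
    polarAngle v < π / 2 := by
  have harg := (Complex.abs_arg_lt_pi_div_two_iff (z := zc v)).mpr (Or.inl (by simpa using h1))
  rw [abs_lt] at harg
  rw [pa_eq_arg (Complex.arg_nonneg_iff.mpr (by simpa using h2))]
  exact harg.2

lemma base {θ : ℝ} (h : θ ∈ Ico (0:ℝ) 2) :
    P0 θ ∈ frontier sq ∧ sectorArea' (polarAngle (P0 θ)) = θ / 2 ∧
      polarAngle (P0 θ) < π / 2 := by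
  obtain ⟨h0, h2⟩ := h
  by_cases h1 : θ ≤ 1
  · have hP : P0 θ = (1, θ) := if_pos h1
    have hfr : P0 θ ∈ frontier sq := by
      rw [frontier_sq, hP]
      simp only [mem_setOf_eq]
      rw [abs_of_nonneg h0, abs_one]
      exact max_eq_left h1
    have hlt : polarAngle (P0 θ) < π / 2 := by
      rw [hP]; exact pa_lt_pi_div_two (by norm_num) (by simpa using h0)
    refine ⟨hfr, ?_, hlt⟩
    rcases h0.lt_or_eq with hpos | hzero
    · have hchar := sector_char (p := ((1:ℝ), θ)) (by simpa using hpos) (by norm_num)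
      have hseteq : {v : ℝ × ℝ | v ∈ sq ∧ polarAngle v ≤ polarAngle ((1:ℝ), θ)} =
          {v : ℝ × ℝ | v ∈ sq ∧ 0 ≤ v.2 ∧ v.2 * 1 ≤ v.1 * θ} := by
        ext v
        simp only [mem_setOf_eq]
        rw [hchar v]
      rw [hP, sectorArea', hseteq, vol1 hpos h1, ENNReal.toReal_ofReal (by linarith)]
    · -- θ = 0
      have hpa : polarAngle ((1:ℝ), (0:ℝ)) = 0 := by
        rw [pa_eq_arg] <;>
          simp [zc, Complex.arg_ofReal_of_nonneg]
      have hnull : volume {v : ℝ × ℝ | v ∈ sq ∧ polarAngle v ≤ polarAngle ((1:ℝ),(0:ℝ))} = 0 := by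
        refine measure_mono_null (t := {p : ℝ × ℝ | p.2 = (fun _ => (0:ℝ)) p.1}) ?_
          (graph_null measurable_const)
        rintro v ⟨-, hv⟩
        rw [hpa] at hv
        have hv0 : polarAngle v = 0 := le_antisymm hv (pa_nonneg v)
        have harg : (zc v).arg = 0 := by
          by_cases hb : 0 ≤ (zc v).arg
          · rw [← pa_eq_arg hb, hv0]
          · push_neg at hb
            rw [pa_eq_arg_add hb] at hv0
            nlinarith [Complex.neg_pi_lt_arg (zc v), Real.pi_pos]
        have := (Complex.arg_eq_zero_iff.mp harg).2
        simpa using this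
      rw [hP, ← hzero, sectorArea', hnull]
      norm_num
  · push_neg at h1
    have hP : P0 θ = (2 - θ, 1) := if_neg (not_le.mpr h1)
    have hfr : P0 θ ∈ frontier sq := by
      rw [frontier_sq, hP]
      simp only [mem_setOf_eq]
      rw [abs_one, abs_of_nonneg (by linarith : (0:ℝ) ≤ 2 - θ)]
      exact max_eq_right (by linarith)
    have hlt : polarAngle (P0 θ) < π / 2 := by
      rw [hP]; exact pa_lt_pi_div_two (by simpa using by linarith) (by norm_num)
    refine ⟨hfr, ?_, hlt⟩
    have hchar := sector_char (p := ((2 - θ : ℝ), (1:ℝ))) (by norm_num) (by simpa using by linarith)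
    have hseteq : {v : ℝ × ℝ | v ∈ sq ∧ polarAngle v ≤ polarAngle ((2 - θ : ℝ), (1:ℝ))} =
        {v : ℝ × ℝ | v ∈ sq ∧ 0 ≤ v.2 ∧ v.2 * (2 - θ) ≤ v.1 * 1} := by
      ext v
      simp only [mem_setOf_eq]
      rw [hchar v]
    rw [hP, sectorArea', hseteq, vol2 (by linarith) (by linarith),
      ENNReal.toReal_ofReal (by linarith)]
    ring

lemma iter {θ : ℝ} (h : θ ∈ Ico (0:ℝ) 2) {k : ℕ} (hk : k ≤ 3) :
    rot^[k] (P0 θ) ∈ frontier sq ∧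
      sectorArea' (polarAngle (rot^[k] (P0 θ))) = (θ + 2 * k) / 2 ∧
      polarAngle (rot^[k] (P0 θ)) < π / 2 + k * (π / 2) := by
  have pip := Real.pi_pos
  induction k with
  | zero =>
    obtain ⟨a, b, c⟩ := base h
    exact ⟨a, by simpa using b, by simpa using c⟩
  | succ n ih =>
    have hn : n ≤ 3 := by omega
    obtain ⟨ha, hb, hc⟩ := ih hn
    have hn2 : n ≤ 2 := by omega
    have hlt : polarAngle (rot^[n] (P0 θ)) < 3 * π / 2 := by
      have : (n : ℝ) ≤ 2 := by exact_mod_cast hn2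
      nlinarith
    have hne : rot^[n] (P0 θ) ≠ 0 := frontier_sq_ne_zero ha
    rw [Function.iterate_succ_apply']
    refine ⟨frontier_rot ha, ?_, ?_⟩
    · rw [sector_step hne hlt, hb]
      push_cast
      ring
    · rw [pa_rot hne hlt]
      push_cast
      linarith

lemma continuous_zc : Continuous zc := by
  unfold zc
  fun_prop

lemma pa_continuousAt {v : ℝ × ℝ} (hv : v.2 ≠ 0) : ContinuousAt polarAngle v := by
  have hslit : zc v ∈ Complex.slitPlane := Or.inr (by simpa using hv)
  have harg : ContinuousAt (fun w : ℝ × ℝ => (zc w).arg) v :=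
    (Complex.continuousAt_arg hslit).comp continuous_zc.continuousAt
  rcases lt_or_gt_of_ne hv with hneg | hpos
  · have hmem : {w : ℝ × ℝ | w.2 < 0} ∈ nhds v :=
      (isOpen_lt continuous_snd continuous_const).mem_nhds hneg
    have heq : (fun w : ℝ × ℝ => (zc w).arg + 2 * π) =ᶠ[nhds v] polarAngle := by
      filter_upwards [hmem] with w hw
      exact (pa_eq_arg_add (Complex.arg_neg_iff.mpr (by simpa using hw))).symm
    exact (harg.add continuousAt_const).congr heq
  · have hmem : {w : ℝ × ℝ | 0 < w.2} ∈ nhds v :=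
      (isOpen_lt continuous_const continuous_snd).mem_nhds hpos
    have heq : (fun w : ℝ × ℝ => (zc w).arg) =ᶠ[nhds v] polarAngle := by
      filter_upwards [hmem] with w hw
      exact (pa_eq_arg (Complex.arg_nonneg_iff.mpr (by simpa using hw.le))).symm
    exact harg.congr heq

lemma zc_pt (γ : ℝ) : zc (Real.cos γ / 2, Real.sin γ / 2) =
    ((1/2 : ℝ) : ℂ) * (Complex.cos (γ : ℂ) + Complex.sin (γ : ℂ) * Complex.I) := by
  rw [← Complex.ofReal_cos, ← Complex.ofReal_sin]
  simp only [zc]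
  push_cast
  ring

lemma pa_pt {γ : ℝ} (h0 : 0 < γ) (h2 : γ < 2 * π) :
    polarAngle (Real.cos γ / 2, Real.sin γ / 2) = γ := by
  have pip := Real.pi_pos
  rcases le_or_gt γ π with hle | hgt
  · have harg : (zc (Real.cos γ / 2, Real.sin γ / 2)).arg = γ := by
      rw [zc_pt]
      exact Complex.arg_mul_cos_add_sin_mul_I (by norm_num) ⟨by linarith, hle⟩
    rw [pa_eq_arg (by rw [harg]; linarith), harg]
  · have hz : zc (Real.cos γ / 2, Real.sin γ / 2) = ((1/2 : ℝ) : ℂ) *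
        (Complex.cos ((γ - 2 * π : ℝ) : ℂ) + Complex.sin ((γ - 2 * π : ℝ) : ℂ) * Complex.I) := by
      rw [zc_pt]
      congr 2
      · have e1 : ((γ - 2 * π : ℝ) : ℂ) = (γ : ℂ) - 2 * (π : ℂ) := by push_cast; ring
        rw [e1, Complex.cos_sub_two_pi]
      · have e1 : ((γ - 2 * π : ℝ) : ℂ) = (γ : ℂ) - 2 * (π : ℂ) := by push_cast; ring
        rw [e1, Complex.sin_sub_two_pi]
    have harg : (zc (Real.cos γ / 2, Real.sin γ / 2)).arg = γ - 2 * π := by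
      rw [hz]
      exact Complex.arg_mul_cos_add_sin_mul_I (by norm_num) ⟨by linarith, by linarith⟩
    rw [pa_eq_arg_add (by rw [harg]; linarith), harg]
    ring

lemma sector_strict_mono {β₁ β₂ : ℝ} (h0 : 0 ≤ β₁) (h12 : β₁ < β₂) (h2 : β₂ < 2 * π) :
    sectorArea' β₁ < sectorArea' β₂ := by
  have pip := Real.pi_pos
  obtain ⟨γ, hγ1, hγ2, hγpi⟩ : ∃ γ, β₁ < γ ∧ γ < β₂ ∧ γ ≠ π := by
    by_cases h : (β₁ + β₂) / 2 = π
    · refine ⟨(β₁ + (β₁ + β₂) / 2) / 2, by linarith, by linarith, ne_of_lt ?_⟩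
      rw [← h]
      linarith
    · exact ⟨(β₁ + β₂) / 2, by linarith, by linarith, h⟩
  have hγ0 : 0 < γ := lt_of_le_of_lt h0 hγ1
  have hγ2π : γ < 2 * π := lt_trans hγ2 h2
  have hsin : Real.sin γ ≠ 0 := by
    intro hs
    obtain ⟨n, hn⟩ := Real.sin_eq_zero_iff.mp hs
    have hn1 : n = 1 := by
      have h1 : 0 < (n : ℝ) * π := hn ▸ hγ0
      have h2' : (n : ℝ) * π < 2 * π := hn ▸ hγ2π
      have hnpos : 0 < n := by
        by_contra hc
        push_neg at hc
        have : (n : ℝ) ≤ 0 := by exact_mod_cast hc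
        nlinarith
      have hnlt : n < 2 := by
        by_contra hc
        push_neg at hc
        have : (2 : ℝ) ≤ (n : ℝ) := by exact_mod_cast hc
        nlinarith
      omega
    apply hγpi
    rw [← hn, hn1]
    simp
  set w : ℝ × ℝ := (Real.cos γ / 2, Real.sin γ / 2) with hw
  have hw2 : w.2 ≠ 0 := div_ne_zero hsin two_ne_zero
  have hpaw : polarAngle w = γ := pa_pt hγ0 hγ2π
  have hcont := pa_continuousAt hw2
  have hnb : polarAngle ⁻¹' Ioo β₁ β₂ ∈ nhds w := by
    apply hcont.preimage_mem_nhds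
    rw [hpaw]
    exact Ioo_mem_nhds hγ1 hγ2
  obtain ⟨U, hUsub, hUopen, hUmem⟩ := mem_nhds_iff.mp hnb
  set W := U ∩ Metric.ball w (1/4) with hW
  have hWopen : IsOpen W := hUopen.inter Metric.isOpen_ball
  have hWne : W.Nonempty := ⟨w, hUmem, by simp [Metric.mem_ball]⟩
  have hWsq : W ⊆ sq := by
    rintro u ⟨-, hu⟩
    rw [Metric.mem_ball, Prod.dist_eq] at hu
    have h1 : dist u.1 w.1 < 1/4 := lt_of_le_of_lt (le_max_left _ _) hu
    have h2 : dist u.2 w.2 < 1/4 := lt_of_le_of_lt (le_max_right _ _) hu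
    rw [Real.dist_eq] at h1 h2
    have hc := Real.abs_cos_le_one γ
    have hs := Real.abs_sin_le_one γ
    have hw1 : |w.1| ≤ 1/2 := by
      rw [hw]
      simp only [abs_div]
      rw [abs_two]
      linarith
    have hw2' : |w.2| ≤ 1/2 := by
      rw [hw]
      simp only [abs_div]
      rw [abs_two]
      linarith
    simp only [sq, mem_setOf_eq, max_le_iff]
    constructor
    · have := abs_sub_abs_le_abs_sub u.1 w.1
      linarith
    · have := abs_sub_abs_le_abs_sub u.2 w.2
      linarith
  have hWpa : ∀ u ∈ W, polarAngle u ∈ Ioo β₁ β₂ := fun u hu => hUsub hu.1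
  -- measure arithmetic
  have hsub : {v : ℝ × ℝ | v ∈ sq ∧ polarAngle v ≤ β₁} ∪ W ⊆
      {v : ℝ × ℝ | v ∈ sq ∧ polarAngle v ≤ β₂} := by
    rintro u (⟨h1, h2'⟩ | hu)
    · exact ⟨h1, by linarith⟩
    · exact ⟨hWsq hu, (hWpa u hu).2.le⟩
  have hdisj : Disjoint {v : ℝ × ℝ | v ∈ sq ∧ polarAngle v ≤ β₁} W := by
    rw [Set.disjoint_left]
    rintro u ⟨-, h1⟩ hu
    exact absurd (hWpa u hu).1 (not_lt.mpr h1)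
  have hWpos : 0 < volume W := hWopen.measure_pos volume hWne
  have hWfin : volume W ≠ ⊤ := by
    refine ne_top_of_le_ne_top ?_ (measure_mono hWsq)
    rw [volume_sq]; simp
  have hvol : volume {v : ℝ × ℝ | v ∈ sq ∧ polarAngle v ≤ β₁} + volume W ≤
      volume {v : ℝ × ℝ | v ∈ sq ∧ polarAngle v ≤ β₂} := by
    rw [← measure_union hdisj hWopen.measurableSet]
    exact measure_mono hsub
  rw [sectorArea', sectorArea']
  rw [ENNReal.toReal_lt_toReal (sector_vol_ne_top β₁) (sector_vol_ne_top β₂)]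
  calc volume {v : ℝ × ℝ | v ∈ sq ∧ polarAngle v ≤ β₁}
      < volume {v : ℝ × ℝ | v ∈ sq ∧ polarAngle v ≤ β₁} + volume W :=
        ENNReal.lt_add_right (sector_vol_ne_top β₁) hWpos.ne'
    _ ≤ _ := hvol

lemma frontier_inj {a b : ℝ × ℝ} (ha : a ∈ frontier sq) (hb : b ∈ frontier sq)
    (hpa : polarAngle a = polarAngle b) : a = b := by
  have hane := frontier_sq_ne_zero ha
  have hbne := frontier_sq_ne_zero hb
  have harg : (zc a).arg = (zc b).arg := arg_eq_of_pa_eq hpa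
  have hmul := (Complex.arg_eq_arg_iff (zc_ne_zero hane) (zc_ne_zero hbne)).mp harg
  set r : ℝ := ‖zc b‖ / ‖zc a‖ with hr
  have hrpos : 0 < r := div_pos (norm_pos_iff.mpr (zc_ne_zero hbne))
    (norm_pos_iff.mpr (zc_ne_zero hane))
  have hb1 : b.1 = r * a.1 := by
    have := congrArg Complex.re hmul
    simpa using this.symm
  have hb2 : b.2 = r * a.2 := by
    have := congrArg Complex.im hmul
    simpa using this.symm
  rw [frontier_sq] at ha hb
  simp only [mem_setOf_eq] at ha hb
  have hmax : max |b.1| |b.2| = r * max |a.1| |a.2| := by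
    rw [hb1, hb2, abs_mul, abs_mul, abs_of_pos hrpos]
    exact (mul_max_of_nonneg _ _ hrpos.le).symm
  have hr1 : r = 1 := by
    rw [ha, hb, mul_one] at hmax
    exact hmax.symm
  rw [hr1, one_mul] at hb1 hb2
  exact Prod.ext hb1.symm hb2.symm

lemma area_inj {a b : ℝ × ℝ} (ha : a ∈ frontier sq) (hb : b ∈ frontier sq)
    (h : sectorArea' (polarAngle a) = sectorArea' (polarAngle b)) : a = b := by
  refine frontier_inj ha hb ?_
  by_contra hne
  rcases lt_or_gt_of_ne hne with h1 | h1
  · exact absurd h (sector_strict_mono (pa_nonneg a) h1 (pa_lt_two_pi b)).ne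
  · exact absurd h.symm (sector_strict_mono (pa_nonneg b) h1 (pa_lt_two_pi a)).ne
end SqCT

namespace SqCT

lemma Qexp (Q : ℝ → ℝ × ℝ)
    (hQ : IsCT {v : ℝ × ℝ | max |v.1| |v.2| ≤ 1} Q) :
    ∀ θ ∈ Ico (0:ℝ) 8, Q θ =
      (if θ ≤ 1 then ((1:ℝ), θ) else if θ ≤ 3 then (2 - θ, 1)
        else if θ ≤ 5 then (-1, 4 - θ) else if θ ≤ 7 then (θ - 6, -1) else (1, θ - 8)) := by
  obtain ⟨hper, hct⟩ := hQ
  have hΩ : {v : ℝ × ℝ | max |v.1| |v.2| ≤ 1} = sq := rfl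
  have h8 : (2 : ℝ) * area2 {v : ℝ × ℝ | max |v.1| |v.2| ≤ 1} = 8 := by
    rw [hΩ]
    show (2 : ℝ) * (volume sq).toReal = 8
    rw [volume_sq]
    norm_num
  rw [h8] at hct
  have hQval : ∀ θ ∈ Ico (0:ℝ) 8, Q θ ∈ frontier sq ∧
      sectorArea' (polarAngle (Q θ)) = θ / 2 := by
    intro θ hθ
    exact hct θ hθ
  have key : ∀ θ₀ ∈ Ico (0:ℝ) 2, ∀ k : ℕ, k ≤ 3 → Q (θ₀ + 2 * k) = rot^[k] (P0 θ₀) := by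
    intro θ₀ hθ₀ k hk
    have hkr : (k : ℝ) ≤ 3 := by exact_mod_cast hk
    have hθ : θ₀ + 2 * k ∈ Ico (0:ℝ) 8 := by
      constructor
      · have := hθ₀.1
        positivity
      · have := hθ₀.2
        linarith
    obtain ⟨hf, hs⟩ := hQval _ hθ
    obtain ⟨hf', hs', -⟩ := iter hθ₀ hk
    exact area_inj hf hf' (by rw [hs, hs'])
  intro θ hθ
  obtain ⟨hθ0, hθ8⟩ := hθ
  rcases lt_or_ge θ 2 with hw | hw
  · have := key θ ⟨hθ0, hw⟩ 0 (by norm_num)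
    simp only [Nat.cast_zero, mul_zero, add_zero, Function.iterate_zero, id] at this
    rw [this, P0]
    rcases le_or_gt θ 1 with h1 | h1
    · rw [if_pos h1, if_pos h1]
    · rw [if_neg (not_le.mpr h1), if_neg (not_le.mpr h1), if_pos (by linarith)]
  rcases lt_or_ge θ 4 with hw4 | hw4
  · have := key (θ - 2) ⟨by linarith, by linarith⟩ 1 (by norm_num)
    rw [show θ - 2 + 2 * ((1:ℕ):ℝ) = θ by push_cast; ring] at this
    rw [this, Function.iterate_one, P0]
    rcases le_or_gt θ 3 with h3 | h3
    · rw [if_pos (by linarith : θ - 2 ≤ 1)]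
      rw [if_neg (by linarith : ¬ θ ≤ 1), if_pos h3]
      simp only [rot]
      norm_num
    · rw [if_neg (by linarith : ¬ θ - 2 ≤ 1)]
      rw [if_neg (by linarith : ¬ θ ≤ 1), if_neg (not_le.mpr h3), if_pos (by linarith)]
      simp only [rot]
      simp only [Prod.mk.injEq]
      refine ⟨trivial, ?_⟩; ring
  rcases lt_or_ge θ 6 with hw6 | hw6
  · have := key (θ - 4) ⟨by linarith, by linarith⟩ 2 (by norm_num)
    rw [show θ - 4 + 2 * ((2:ℕ):ℝ) = θ by push_cast; ring] at this
    rw [this, show rot^[2] = rot ∘ rot from rfl, P0]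
    rcases le_or_gt θ 5 with h5 | h5
    · rw [if_pos (by linarith : θ - 4 ≤ 1)]
      rw [if_neg (by linarith : ¬ θ ≤ 1), if_neg (by linarith : ¬ θ ≤ 3), if_pos h5]
      simp only [Function.comp, rot]
      norm_num
    · rw [if_neg (by linarith : ¬ θ - 4 ≤ 1)]
      rw [if_neg (by linarith : ¬ θ ≤ 1), if_neg (by linarith : ¬ θ ≤ 3),
        if_neg (not_le.mpr h5), if_pos (by linarith)]
      simp only [Function.comp, rot]
      simp only [Prod.mk.injEq]
      refine ⟨?_, trivial⟩; ring
  · have := key (θ - 6) ⟨by linarith, by linarith⟩ 3 (by norm_num)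
    rw [show θ - 6 + 2 * ((3:ℕ):ℝ) = θ by push_cast; ring] at this
    rw [this, show rot^[3] = rot ∘ rot ∘ rot from rfl, P0]
    rcases le_or_gt θ 7 with h7 | h7
    · rw [if_pos (by linarith : θ - 6 ≤ 1)]
      rw [if_neg (by linarith : ¬ θ ≤ 1), if_neg (by linarith : ¬ θ ≤ 3),
        if_neg (by linarith : ¬ θ ≤ 5), if_pos h7]
      simp only [Function.comp, rot]
      norm_num
    · rw [if_neg (by linarith : ¬ θ - 6 ≤ 1)]
      rw [if_neg (by linarith : ¬ θ ≤ 1), if_neg (by linarith : ¬ θ ≤ 3),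
        if_neg (by linarith : ¬ θ ≤ 5), if_neg (not_le.mpr h7)]
      simp only [Function.comp, rot]
      simp only [Prod.mk.injEq]
      constructor <;> ring

end SqCT


/-- For the square `Ω° = {max(|u|, |v|) ≤ 1}`: `cos_{Ω°}`, `sin_{Ω°}` are `8`-periodic,
`cos_{Ω°} θ = 1` on `[0,1] ∪ [7,8]`, `cos_{Ω°} θ = ½|θ−3| + ½|θ−5| − 2` on `[1,7]`,
and `sin_{Ω°} θ = cos_{Ω°}(θ − 2)`. -/
theorem stmt16 (Q : ℝ → ℝ × ℝ)
    (hQ : IsCT {v : ℝ × ℝ | max |v.1| |v.2| ≤ 1} Q) :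
    (∀ θ : ℝ, Q (θ + 8) = Q θ) ∧
    (∀ θ ∈ Set.Icc (0 : ℝ) 1 ∪ Set.Icc (7 : ℝ) 8, (Q θ).1 = 1) ∧
    (∀ θ ∈ Set.Icc (1 : ℝ) 7, (Q θ).1 = 1 / 2 * |θ - 3| + 1 / 2 * |θ - 5| - 2) ∧
    (∀ θ : ℝ, (Q θ).2 = (Q (θ - 2)).1) := by
  have hE := SqCT.Qexp Q hQ
  have h8 : (2 : ℝ) * area2 {v : ℝ × ℝ | max |v.1| |v.2| ≤ 1} = 8 := by
    show (2 : ℝ) * (volume SqCT.sq).toReal = 8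
    rw [SqCT.volume_sq]
    norm_num
  have hper : ∀ θ : ℝ, Q (θ + 8) = Q θ := by
    intro θ
    have := hQ.1 θ
    rwa [h8] at this
  have hp : Function.Periodic Q 8 := hper
  refine ⟨hper, ?_, ?_, ?_⟩
  · rintro θ (⟨h0, h1⟩ | ⟨h7, h8'⟩)
    · rw [hE θ ⟨h0, by linarith⟩, if_pos h1]
    · rcases h8'.lt_or_eq with h | h
      · rw [hE θ ⟨by linarith, h⟩]
        rcases le_or_gt θ 7 with h7' | h7'
        · have h77 : θ = 7 := le_antisymm h7' h7
          rw [if_neg (by linarith), if_neg (by linarith), if_neg (by linarith), if_pos h7']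
          rw [h77]
          norm_num
        · rw [if_neg (by linarith), if_neg (by linarith), if_neg (by linarith),
            if_neg (not_le.mpr h7')]
      · have : Q θ = Q 0 := by
          rw [h, show (8:ℝ) = 0 + 8 by ring, hper 0]
        rw [this, hE 0 ⟨le_rfl, by norm_num⟩, if_pos (by norm_num)]
  · intro θ ⟨h1, h7⟩
    rw [hE θ ⟨by linarith, by linarith⟩]
    rcases le_or_gt θ 1 with ha | ha
    · have : θ = 1 := le_antisymm ha h1
      rw [if_pos ha, this]
      norm_num
    rcases le_or_gt θ 3 with hb | hb
    · rw [if_neg (not_le.mpr ha), if_pos hb]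
      rw [abs_of_nonpos (by linarith), abs_of_nonpos (by linarith)]
      ring
    rcases le_or_gt θ 5 with hc | hc
    · rw [if_neg (not_le.mpr ha), if_neg (not_le.mpr hb), if_pos hc]
      rw [abs_of_nonneg (by linarith), abs_of_nonpos (by linarith)]
      ring
    · rw [if_neg (not_le.mpr ha), if_neg (not_le.mpr hb), if_neg (not_le.mpr hc), if_pos h7]
      rw [abs_of_nonneg (by linarith), abs_of_nonneg (by linarith)]
      ring
  · intro θ
    set n : ℤ := ⌊θ / 8⌋ with hn
    set x := θ - n * 8 with hx
    have hx0 : 0 ≤ x := Int.sub_floor_div_mul_nonneg θ (by norm_num : (0:ℝ) < 8)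
    have hx8 : x < 8 := Int.sub_floor_div_mul_lt θ (by norm_num : (0:ℝ) < 8)
    have e1 : Q θ = Q x := (hp.sub_int_mul_eq n).symm
    have e2 : Q (θ - 2) = Q (x - 2) := by
      have : x - 2 = θ - 2 - n * 8 := by rw [hx]; ring
      rw [this]
      exact (hp.sub_int_mul_eq n).symm
    rw [e1, e2]
    rcases lt_or_ge x 2 with h2 | h2
    · have e3 : Q (x - 2) = Q (x + 6) := by
        rw [show x + 6 = x - 2 + 8 by ring, hper]
      rw [e3, hE x ⟨hx0, by linarith⟩, hE (x + 6) ⟨by linarith, by linarith⟩]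
      rcases le_or_gt x 1 with ha | ha
      · rw [if_pos ha, if_neg (by linarith), if_neg (by linarith), if_neg (by linarith),
          if_pos (by linarith)]
        norm_num
      · rw [if_neg (not_le.mpr ha), if_pos (by linarith), if_neg (by linarith),
          if_neg (by linarith), if_neg (by linarith), if_neg (by linarith)]
    · rw [hE x ⟨hx0, hx8⟩, hE (x - 2) ⟨by linarith, by linarith⟩]
      rcases le_or_gt x 3 with hb | hb
      · rw [if_neg (by linarith), if_pos hb, if_pos (by linarith)]
      rcases le_or_gt x 5 with hc | hc
      · rw [if_neg (by linarith), if_neg (not_le.mpr hb), if_pos hc,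
          if_neg (by linarith), if_pos (by linarith)]
        show 4 - x = 2 - (x - 2)
        ring
      rcases le_or_gt x 7 with hd | hd
      · rw [if_neg (by linarith), if_neg (by linarith), if_neg (not_le.mpr hc), if_pos hd,
          if_neg (by linarith), if_neg (by linarith), if_pos (by linarith)]
      · rw [if_neg (by linarith), if_neg (by linarith), if_neg (by linarith),
          if_neg (not_le.mpr hd), if_neg (by linarith), if_neg (by linarith),
          if_neg (by linarith), if_pos (by linarith)]
        show x - 8 = x - 2 - 6
        ring
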